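/- Let Λ be a ℤ-lattice with finite-order automorphism M_h, and let Λ⁽¹⁾ ⊂ Λ be an Orlik block with cyclic generator e⁽¹⁾, i.e. Λ⁽¹⁾ = ⊕_{j=0}^{d-1} ℤ·M_h^j(e⁽¹⁾) where d = deg p_{Λ⁽¹⁾} and Λ⁽¹⁾ is primitive and M_h-invariant. If p_{Λ⁽¹⁾} = p₁·p₂ with deg p₁ ≥ 1 and deg p₂ ≥ 1, then the sublattice Λ⁽²⁾ := Λ⁽¹⁾ ∩ (⊕_{λ: p₁(λ)=0} ker(M_h - λ)) is also an Orlik block, with cyclic generator e⁽²⁾ := p₂(M_h)(e⁽¹⁾). -/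

import Mathlib

open Polynomial

section Aux

variable {Λ : Type*} [AddCommGroup Λ] [Module ℤ Λ]

lemma aux_mul_apply (Mend : Module.End ℤ Λ) (r s : ℤ[X]) (e : Λ) :
    aeval Mend (r * s) e = aeval Mend r (aeval Mend s e) := by
  rw [map_mul]; rfl

lemma aux_sum (Mend : Module.End ℤ Λ) (q : ℤ[X]) (e : Λ) (n : ℕ) (h : q.natDegree < n) :
    aeval Mend q e = ∑ i ∈ Finset.range n, q.coeff i • (Mend ^ i) e := by
  rw [Polynomial.aeval_eq_sum_range' h]
  simp only [LinearMap.sum_apply, LinearMap.smul_apply]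
  exact Finset.sum_congr rfl fun i _ => rfl

lemma aux_coeff (m : ℕ) (g : Fin m → ℤ) (k : Fin m) :
    (∑ i : Fin m, g i • (X : ℤ[X]) ^ (i : ℕ)).coeff (k : ℕ) = g k := by
  rw [Polynomial.finset_sum_coeff]
  rw [Finset.sum_eq_single k]
  · simp
  · intro b _ hb
    rw [Polynomial.coeff_smul, Polynomial.coeff_X_pow,
      if_neg (fun h => hb (Fin.ext h.symm)), smul_zero]
  · simp

lemma aux_degsum (m : ℕ) (hm : 0 < m) (g : Fin m → ℤ) :
    (∑ i : Fin m, g i • (X : ℤ[X]) ^ (i : ℕ)).natDegree < m := by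
  set q := ∑ i : Fin m, g i • (X : ℤ[X]) ^ (i : ℕ) with hq
  by_cases h0 : q = 0
  · simpa [h0] using hm
  rw [Polynomial.natDegree_lt_iff_degree_lt h0]
  calc q.degree ≤ Finset.univ.sup (fun i : Fin m => (g i • (X : ℤ[X]) ^ (i : ℕ)).degree) :=
        Polynomial.degree_sum_le _ _
    _ < (m : ℕ) := by
        rw [Finset.sup_lt_iff (by exact_mod_cast WithBot.bot_lt_coe m)]
        intro i _
        refine lt_of_le_of_lt (Polynomial.degree_smul_le _ _) ?_
        rw [Polynomial.degree_X_pow]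
        exact_mod_cast i.isLt

lemma aux_zsmul (Mend : Module.End ℤ Λ) (c : ℤ) (r : ℤ[X]) (e : Λ) :
    aeval Mend (C c * r) e = c • (aeval Mend r e) := by
  rw [aux_mul_apply, Polynomial.aeval_C]
  rfl

end Aux

theorem stmt_10 (Λ : Type*) [AddCommGroup Λ] [Module ℤ Λ]
    [Module.Free ℤ Λ] [Module.Finite ℤ Λ]
    (M : Λ ≃ₗ[ℤ] Λ) (n : ℕ) (hn : 0 < n) (hMn : M ^ n = 1)
    (Mend : Module.End ℤ Λ) (hMend : Mend = M.toLinearMap)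
    (N : Submodule ℤ Λ) (e : Λ) (p p₁ p₂ : Polynomial ℤ)
    (hp : p = p₁ * p₂) (hpm : p.Monic)
    (hdeg1 : 1 ≤ p₁.natDegree) (hdeg2 : 1 ≤ p₂.natDegree)
    (hNspan : N = Submodule.span ℤ
      (Set.range fun j : Fin p.natDegree => (Mend ^ (j : ℕ)) e))
    (hNind : LinearIndependent ℤ (fun j : Fin p.natDegree => (Mend ^ (j : ℕ)) e))
    (hNprim : ∀ (a : Λ) (c : ℤ), c ≠ 0 → c • a ∈ N → a ∈ N)
    (hpe : (Polynomial.aeval Mend p) e = 0) :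
    LinearIndependent ℤ
      (fun j : Fin p₁.natDegree => (Mend ^ (j : ℕ)) ((Polynomial.aeval Mend p₂) e)) ∧
    N ⊓ LinearMap.ker (Polynomial.aeval Mend p₁)
      = Submodule.span ℤ
          (Set.range fun j : Fin p₁.natDegree =>
            (Mend ^ (j : ℕ)) ((Polynomial.aeval Mend p₂) e)) ∧
    (∀ (a : Λ) (c : ℤ), c ≠ 0 →
      c • a ∈ N ⊓ LinearMap.ker (Polynomial.aeval Mend p₁) →
      a ∈ N ⊓ LinearMap.ker (Polynomial.aeval Mend p₁)) := by
  have hpne : p ≠ 0 := hpm.ne_zero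
  have hp1ne : p₁ ≠ 0 := fun h => hpne (by rw [hp, h, zero_mul])
  have hp2ne : p₂ ≠ 0 := fun h => hpne (by rw [hp, h, mul_zero])
  have hd : p.natDegree = p₁.natDegree + p₂.natDegree := by
    rw [hp, Polynomial.natDegree_mul hp1ne hp2ne]
  have hd0 : 0 < p.natDegree := by omega
  -- anything killed of low degree is zero
  have hzero : ∀ q : ℤ[X], q.natDegree < p.natDegree → aeval Mend q e = 0 → q = 0 := by
    intro q hq hqe
    rw [aux_sum Mend q e p.natDegree hq] at hqe
    rw [← Fin.sum_univ_eq_sum_range (fun i => q.coeff i • (Mend ^ i) e)] at hqe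
    have := Fintype.linearIndependent_iff.mp hNind (fun j : Fin p.natDegree => q.coeff j) ?_
    · ext k
      rcases lt_or_ge k p.natDegree with hk | hk
      · simpa using this ⟨k, hk⟩
      · simp [Polynomial.coeff_eq_zero_of_natDegree_lt (lt_of_lt_of_le hq hk)]
    · rw [← hqe]
      exact Finset.sum_congr rfl fun i _ => int_smul_eq_zsmul ‹Module ℤ Λ› _ _
  -- reduction mod p does not change the value on e
  have hmod : ∀ r : ℤ[X], aeval Mend (r %ₘ p) e = aeval Mend r e := by
    intro r
    conv_rhs => rw [← Polynomial.modByMonic_add_div r p]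
    rw [map_add, LinearMap.add_apply, mul_comm, aux_mul_apply, hpe, map_zero, add_zero]
  -- anything killing e is divisible by p
  have hdvd : ∀ r : ℤ[X], aeval Mend r e = 0 → p ∣ r := by
    intro r hr
    rw [← Polynomial.modByMonic_eq_zero_iff_dvd hpm]
    by_cases h0 : r %ₘ p = 0
    · exact h0
    refine hzero _ ?_ (by rw [hmod]; exact hr)
    exact Polynomial.natDegree_lt_natDegree h0 (Polynomial.degree_modByMonic_lt r hpm)
  -- low-degree evaluations lie in N
  have hlow : ∀ q : ℤ[X], q.natDegree < p.natDegree → aeval Mend q e ∈ N := by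
    intro q hq
    rw [aux_sum Mend q e p.natDegree hq, hNspan]
    refine Submodule.sum_mem _ fun i hi => ?_
    have hmem : (Mend ^ i) e ∈ Set.range (fun j : Fin p.natDegree => (Mend ^ (j : ℕ)) e) :=
      ⟨⟨i, Finset.mem_range.mp hi⟩, rfl⟩
    exact (Submodule.span ℤ _).toAddSubgroup.zsmul_mem (Submodule.subset_span hmem) (q.coeff i)
  -- all evaluations lie in N
  have hall : ∀ q : ℤ[X], aeval Mend q e ∈ N := by
    intro q
    rw [← hmod q]
    by_cases h0 : q %ₘ p = 0
    · rw [h0, map_zero]; exact N.zero_mem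
    exact hlow _ (Polynomial.natDegree_lt_natDegree h0 (Polynomial.degree_modByMonic_lt q hpm))
  -- every element of N is an evaluation of a low-degree polynomial
  have hrep : ∀ x ∈ N, ∃ q : ℤ[X], q.natDegree < p.natDegree ∧ aeval Mend q e = x := by
    intro x hx
    rw [hNspan, Submodule.mem_span_range_iff_exists_fun] at hx
    obtain ⟨c, hc⟩ := hx
    refine ⟨∑ j : Fin p.natDegree, c j • (X : ℤ[X]) ^ (j : ℕ), aux_degsum _ hd0 c, ?_⟩
    rw [aux_sum Mend _ e p.natDegree (aux_degsum _ hd0 c),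
      ← Fin.sum_univ_eq_sum_range
        (fun i => (∑ j : Fin p.natDegree, c j • (X : ℤ[X]) ^ (j : ℕ)).coeff i • (Mend ^ i) e),
      ← hc]
    refine Finset.sum_congr rfl fun i _ => ?_
    rw [aux_coeff _ c i]
    exact (int_smul_eq_zsmul ‹Module ℤ Λ› _ _).symm
  refine ⟨?_, ?_, ?_⟩
  · -- linear independence
    apply Fintype.linearIndependent_iff.mpr
    intro g hg j
    set s := ∑ i : Fin p₁.natDegree, g i • (X : ℤ[X]) ^ (i : ℕ) with hs
    have hdegs : s.natDegree < p₁.natDegree := aux_degsum _ hdeg1 g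
    have hsval : aeval Mend (s * p₂) e = 0 := by
      rw [aux_mul_apply, aux_sum Mend s _ p₁.natDegree hdegs,
        ← Fin.sum_univ_eq_sum_range
          (fun i => s.coeff i • (Mend ^ i) ((aeval Mend p₂) e)), ← hg]
      refine Finset.sum_congr rfl fun i _ => ?_
      rw [hs, aux_coeff _ g i]
      exact (int_smul_eq_zsmul ‹Module ℤ Λ› _ _).symm
    have hdegsp : (s * p₂).natDegree < p.natDegree := by
      have h2 : (s * p₂).natDegree ≤ s.natDegree + p₂.natDegree := Polynomial.natDegree_mul_le
      omega
    have hs0 : s = 0 := by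
      rcases mul_eq_zero.mp (hzero _ hdegsp hsval) with h | h
      · exact h
      · exact absurd h hp2ne
    have := aux_coeff _ g j
    rw [← hs, hs0] at this
    simpa using this.symm
  · -- the intersection equals the span
    apply le_antisymm
    · rintro x hx
      obtain ⟨hxN, hxk⟩ := Submodule.mem_inf.mp hx
      obtain ⟨q, hq, rfl⟩ := hrep x hxN
      rw [LinearMap.mem_ker, ← aux_mul_apply] at hxk
      obtain ⟨s, hsq⟩ := hdvd _ hxk
      have hq2 : q = p₂ * s := by
        apply mul_left_cancel₀ hp1ne
        rw [hsq, hp]; ring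
      by_cases hs0 : s = 0
      · rw [hq2, hs0, mul_zero, map_zero]
        exact Submodule.zero_mem _
      have hdegs : s.natDegree < p₁.natDegree := by
        have := Polynomial.natDegree_mul hp2ne hs0
        rw [← hq2] at this
        omega
      rw [hq2, mul_comm, aux_mul_apply, aux_sum Mend s _ p₁.natDegree hdegs]
      rw [Submodule.mem_span_range_iff_exists_fun]
      refine ⟨fun j : Fin p₁.natDegree => s.coeff j, ?_⟩
      rw [← Fin.sum_univ_eq_sum_range (fun i => s.coeff i • (Mend ^ i) ((aeval Mend p₂) e))]
      exact Finset.sum_congr rfl fun i _ => int_smul_eq_zsmul ‹Module ℤ Λ› _ _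
    · rw [Submodule.span_le]
      rintro _ ⟨j, rfl⟩
      have hx : (Mend ^ (j : ℕ)) ((aeval Mend p₂) e)
          = aeval Mend ((X : ℤ[X]) ^ (j : ℕ) * p₂) e := by
        rw [aux_mul_apply, map_pow, Polynomial.aeval_X]
      rw [SetLike.mem_coe]
      refine Submodule.mem_inf.mpr ⟨?_, ?_⟩
      · show (Mend ^ (j : ℕ)) ((aeval Mend p₂) e) ∈ N
        rw [hx]; exact hall _
      · show (Mend ^ (j : ℕ)) ((aeval Mend p₂) e) ∈ LinearMap.ker (aeval Mend p₁)
        rw [LinearMap.mem_ker, hx, ← aux_mul_apply]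
        have h3 : p₁ * ((X : ℤ[X]) ^ (j : ℕ) * p₂) = (X : ℤ[X]) ^ (j : ℕ) * p := by
          rw [hp]; ring
        rw [h3, aux_mul_apply, hpe, map_zero]
  · -- primitivity
    intro a c hc hmem
    obtain ⟨h1, h2⟩ := Submodule.mem_inf.mp hmem
    have haN : a ∈ N := hNprim a c hc h1
    refine Submodule.mem_inf.mpr ⟨haN, ?_⟩
    obtain ⟨q, hq, hqa⟩ := hrep a haN
    rw [LinearMap.mem_ker] at h2 ⊢
    rw [map_zsmul] at h2
    set r := (p₁ * q) %ₘ p with hr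
    have hre : aeval Mend r e = aeval Mend p₁ a := by
      rw [hr, hmod, aux_mul_apply, hqa]
    have key : aeval Mend (Polynomial.C c * r) e = 0 := by
      rw [aux_zsmul, hre]; exact h2
    have hrd : r.natDegree < p.natDegree := by
      by_cases h0 : r = 0
      · simpa [h0] using hd0
      · exact Polynomial.natDegree_lt_natDegree h0 (Polynomial.degree_modByMonic_lt _ hpm)
    have hr0 : Polynomial.C c * r = 0 :=
      hzero _ (lt_of_le_of_lt (Polynomial.natDegree_C_mul_le c r) hrd) key
    have : r = 0 := by
      rcases mul_eq_zero.mp hr0 with h | h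
      · exact absurd (Polynomial.C_eq_zero.mp h) hc
      · exact h
    rw [← hre, this, map_zero, LinearMap.zero_apply]
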